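/- Let R be a commutative ring, f ∈ R⟦x⟧, and suppose u ∈ R⟦t,x⟧ satisfies u = f(x + t·u). Then u satisfies the Hopf equation ∂u/∂t = u · ∂u/∂x, and substituting t = 0 into u yields f(x). -/

import Mathlib

/-- Substitution of a two-variable formal power series `w` (intended to have zero
constant coefficient) into a one-variable formal power series `f`. -/
noncomputable def substTwoVar {R : Type*} [CommRing R] (f : PowerSeries R)
    (w : MvPowerSeries (Fin 2) R) : MvPowerSeries (Fin 2) R :=
  fun m => ∑ n ∈ Finset.range ((m.sum fun _ e => e) + 1),
    PowerSeries.coeff n f * MvPowerSeries.coeff m (w ^ n)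

/-- The formal partial derivative of a two-variable formal power series with respect
to the `i`-th variable. -/
noncomputable def pderivTwoVar {R : Type*} [CommRing R] (i : Fin 2)
    (f : MvPowerSeries (Fin 2) R) : MvPowerSeries (Fin 2) R :=
  fun m => ((m i + 1 : ℕ) : R) * MvPowerSeries.coeff (m + Finsupp.single i 1) f

namespace Statement8Aux

open MvPowerSeries Finset

variable {R : Type*} [CommRing R]

lemma fin2_eq_iff {p q : Fin 2 →₀ ℕ} : p = q ↔ p 0 = q 0 ∧ p 1 = q 1 := by
  constructor
  · rintro rfl; exact ⟨rfl, rfl⟩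
  · rintro ⟨h0, h1⟩
    ext j
    refine Fin.cases ?_ ?_ j
    · exact h0
    · intro j'
      have : j' = 0 := Subsingleton.elim _ _
      subst this
      exact h1

lemma deg_eq (m : Fin 2 →₀ ℕ) : (m.sum fun _ e => e) = m 0 + m 1 := by
  rw [Finsupp.sum_fintype]
  · exact Fin.sum_univ_two _
  · intro; rfl

lemma coeff_pderiv (i : Fin 2) (φ : MvPowerSeries (Fin 2) R) (m : Fin 2 →₀ ℕ) :
    MvPowerSeries.coeff m (pderivTwoVar i φ)
      = ((m i + 1 : ℕ) : R) * MvPowerSeries.coeff (m + Finsupp.single i 1) φ := rfl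

lemma coeff_subst' (f : PowerSeries R) (w : MvPowerSeries (Fin 2) R) (m : Fin 2 →₀ ℕ) :
    MvPowerSeries.coeff m (substTwoVar f w)
      = ∑ n ∈ Finset.range ((m.sum fun _ e => e) + 1),
        PowerSeries.coeff n f * MvPowerSeries.coeff m (w ^ n) := rfl

lemma pderiv_add (i : Fin 2) (a b : MvPowerSeries (Fin 2) R) :
    pderivTwoVar i (a + b) = pderivTwoVar i a + pderivTwoVar i b := by
  apply MvPowerSeries.ext
  intro m
  rw [map_add, coeff_pderiv, coeff_pderiv, coeff_pderiv, map_add, mul_add]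

/-- Reindexing lemma for antidiagonal sums (second component). -/
lemma sum_shift (i : Fin 2) (m : Fin 2 →₀ ℕ) (F : (Fin 2 →₀ ℕ) → (Fin 2 →₀ ℕ) → R) :
    ∑ x ∈ (antidiagonal (m + Finsupp.single i 1) :
        Finset ((Fin 2 →₀ ℕ) × (Fin 2 →₀ ℕ))), ((x.2 i : ℕ) : R) * F x.1 x.2
      = ∑ x ∈ (antidiagonal m : Finset ((Fin 2 →₀ ℕ) × (Fin 2 →₀ ℕ))),
          ((x.2 i + 1 : ℕ) : R) * F x.1 (x.2 + Finsupp.single i 1) := by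
  classical
  have hinj : ∀ x ∈ antidiagonal m, ∀ y ∈ antidiagonal m,
      (fun x : (Fin 2 →₀ ℕ) × (Fin 2 →₀ ℕ) => (x.1, x.2 + Finsupp.single i 1)) x
        = (fun x : (Fin 2 →₀ ℕ) × (Fin 2 →₀ ℕ) => (x.1, x.2 + Finsupp.single i 1)) y
        → x = y := by
    intro x _ y _ h
    simp only [Prod.ext_iff] at h ⊢
    exact ⟨h.1, add_right_cancel h.2⟩
  have himg : (antidiagonal m).image
        (fun x : (Fin 2 →₀ ℕ) × (Fin 2 →₀ ℕ) => (x.1, x.2 + Finsupp.single i 1))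
      ⊆ antidiagonal (m + Finsupp.single i 1) := by
    intro y hy
    simp only [Finset.mem_image] at hy
    obtain ⟨x, hx, rfl⟩ := hy
    rw [Finset.HasAntidiagonal.mem_antidiagonal] at hx ⊢
    rw [← add_assoc, hx]
  have hvan : ∀ y ∈ antidiagonal (m + Finsupp.single i 1),
      y ∉ (antidiagonal m).image
        (fun x : (Fin 2 →₀ ℕ) × (Fin 2 →₀ ℕ) => (x.1, x.2 + Finsupp.single i 1)) →
      ((y.2 i : ℕ) : R) * F y.1 y.2 = 0 := by
    intro y hy hyn
    rw [Finset.HasAntidiagonal.mem_antidiagonal] at hy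
    by_cases h2 : y.2 i = 0
    · rw [h2]; simp
    · exfalso
      apply hyn
      have hle : Finsupp.single i 1 ≤ y.2 :=
        Finsupp.single_le_iff.mpr (Nat.one_le_iff_ne_zero.mpr h2)
      refine Finset.mem_image.mpr ⟨(y.1, y.2 - Finsupp.single i 1), ?_, ?_⟩
      · rw [Finset.HasAntidiagonal.mem_antidiagonal]
        show y.1 + (y.2 - Finsupp.single i 1) = m
        rw [← add_tsub_assoc_of_le hle, hy, add_tsub_cancel_right]
      · show (y.1, y.2 - Finsupp.single i 1 + Finsupp.single i 1) = y
        rw [Prod.ext_iff]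
        exact ⟨rfl, tsub_add_cancel_of_le hle⟩
  rw [← Finset.sum_subset himg hvan, Finset.sum_image hinj]
  apply Finset.sum_congr rfl
  intro x _
  congr 1
  simp [Finsupp.single_apply]

/-- Reindexing lemma for antidiagonal sums (first component). -/
lemma sum_shift1 (i : Fin 2) (m : Fin 2 →₀ ℕ) (F : (Fin 2 →₀ ℕ) → (Fin 2 →₀ ℕ) → R) :
    ∑ x ∈ (antidiagonal (m + Finsupp.single i 1) :
        Finset ((Fin 2 →₀ ℕ) × (Fin 2 →₀ ℕ))), ((x.1 i : ℕ) : R) * F x.1 x.2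
      = ∑ x ∈ (antidiagonal m : Finset ((Fin 2 →₀ ℕ) × (Fin 2 →₀ ℕ))),
          ((x.1 i + 1 : ℕ) : R) * F (x.1 + Finsupp.single i 1) x.2 := by
  classical
  have hinj : ∀ x ∈ antidiagonal m, ∀ y ∈ antidiagonal m,
      (fun x : (Fin 2 →₀ ℕ) × (Fin 2 →₀ ℕ) => (x.1 + Finsupp.single i 1, x.2)) x
        = (fun x : (Fin 2 →₀ ℕ) × (Fin 2 →₀ ℕ) => (x.1 + Finsupp.single i 1, x.2)) y
        → x = y := by
    intro x _ y _ h
    simp only [Prod.ext_iff] at h ⊢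
    exact ⟨add_right_cancel h.1, h.2⟩
  have himg : (antidiagonal m).image
        (fun x : (Fin 2 →₀ ℕ) × (Fin 2 →₀ ℕ) => (x.1 + Finsupp.single i 1, x.2))
      ⊆ antidiagonal (m + Finsupp.single i 1) := by
    intro y hy
    simp only [Finset.mem_image] at hy
    obtain ⟨x, hx, rfl⟩ := hy
    rw [Finset.HasAntidiagonal.mem_antidiagonal] at hx ⊢
    show x.1 + Finsupp.single i 1 + x.2 = m + Finsupp.single i 1
    rw [add_right_comm, hx]
  have hvan : ∀ y ∈ antidiagonal (m + Finsupp.single i 1),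
      y ∉ (antidiagonal m).image
        (fun x : (Fin 2 →₀ ℕ) × (Fin 2 →₀ ℕ) => (x.1 + Finsupp.single i 1, x.2)) →
      ((y.1 i : ℕ) : R) * F y.1 y.2 = 0 := by
    intro y hy hyn
    rw [Finset.HasAntidiagonal.mem_antidiagonal] at hy
    by_cases h2 : y.1 i = 0
    · rw [h2]; simp
    · exfalso
      apply hyn
      have hle : Finsupp.single i 1 ≤ y.1 :=
        Finsupp.single_le_iff.mpr (Nat.one_le_iff_ne_zero.mpr h2)
      refine Finset.mem_image.mpr ⟨(y.1 - Finsupp.single i 1, y.2), ?_, ?_⟩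
      · rw [Finset.HasAntidiagonal.mem_antidiagonal]
        show y.1 - Finsupp.single i 1 + y.2 = m
        rw [tsub_add_eq_add_tsub hle, hy, add_tsub_cancel_right]
      · show (y.1 - Finsupp.single i 1 + Finsupp.single i 1, y.2) = y
        rw [Prod.ext_iff]
        exact ⟨tsub_add_cancel_of_le hle, rfl⟩
  rw [← Finset.sum_subset himg hvan, Finset.sum_image hinj]
  apply Finset.sum_congr rfl
  intro x _
  congr 1
  simp [Finsupp.single_apply]

lemma pderiv_one_eq (i : Fin 2) : pderivTwoVar i (1 : MvPowerSeries (Fin 2) R) = 0 := by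
  apply MvPowerSeries.ext
  intro m
  rw [coeff_pderiv, map_zero]
  classical
  rw [MvPowerSeries.coeff_one, if_neg, mul_zero]
  intro h
  have := DFunLike.congr_fun h i
  simp [Finsupp.single_apply] at this

/-- Leibniz rule for `pderivTwoVar`. -/
lemma pderiv_mul (i : Fin 2) (a b : MvPowerSeries (Fin 2) R) :
    pderivTwoVar i (a * b) = a * pderivTwoVar i b + pderivTwoVar i a * b := by
  classical
  apply MvPowerSeries.ext
  intro m
  rw [map_add, coeff_pderiv, MvPowerSeries.coeff_mul, MvPowerSeries.coeff_mul,
    MvPowerSeries.coeff_mul, Finset.mul_sum]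
  have key : ∀ x ∈ (antidiagonal (m + Finsupp.single i 1) :
      Finset ((Fin 2 →₀ ℕ) × (Fin 2 →₀ ℕ))),
      ((m i + 1 : ℕ) : R) * (MvPowerSeries.coeff x.1 a * MvPowerSeries.coeff x.2 b)
        = ((x.1 i : ℕ) : R) * (MvPowerSeries.coeff x.1 a * MvPowerSeries.coeff x.2 b)
          + ((x.2 i : ℕ) : R) * (MvPowerSeries.coeff x.1 a * MvPowerSeries.coeff x.2 b) := by
    intro x hx
    rw [Finset.HasAntidiagonal.mem_antidiagonal] at hx
    have h : x.1 i + x.2 i = m i + 1 := by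
      have := DFunLike.congr_fun hx i
      simpa [Finsupp.single_apply] using this
    rw [← h]
    push_cast
    ring
  rw [Finset.sum_congr rfl key, Finset.sum_add_distrib]
  have hA : ∑ x ∈ (antidiagonal (m + Finsupp.single i 1) :
        Finset ((Fin 2 →₀ ℕ) × (Fin 2 →₀ ℕ))),
      ((x.2 i : ℕ) : R) * (MvPowerSeries.coeff x.1 a * MvPowerSeries.coeff x.2 b)
      = ∑ x ∈ (antidiagonal m : Finset ((Fin 2 →₀ ℕ) × (Fin 2 →₀ ℕ))),
        MvPowerSeries.coeff x.1 a * MvPowerSeries.coeff x.2 (pderivTwoVar i b) := by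
    rw [sum_shift i m (fun p q => MvPowerSeries.coeff p a * MvPowerSeries.coeff q b)]
    apply Finset.sum_congr rfl
    intro x _
    rw [coeff_pderiv]
    ring
  have hB : ∑ x ∈ (antidiagonal (m + Finsupp.single i 1) :
        Finset ((Fin 2 →₀ ℕ) × (Fin 2 →₀ ℕ))),
      ((x.1 i : ℕ) : R) * (MvPowerSeries.coeff x.1 a * MvPowerSeries.coeff x.2 b)
      = ∑ x ∈ (antidiagonal m : Finset ((Fin 2 →₀ ℕ) × (Fin 2 →₀ ℕ))),
        MvPowerSeries.coeff x.1 (pderivTwoVar i a) * MvPowerSeries.coeff x.2 b := by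
    rw [sum_shift1 i m (fun p q => MvPowerSeries.coeff p a * MvPowerSeries.coeff q b)]
    apply Finset.sum_congr rfl
    intro x _
    rw [coeff_pderiv]
    ring
  rw [hA, hB, add_comm]

lemma pderiv_pow (i : Fin 2) (w : MvPowerSeries (Fin 2) R) (n : ℕ) :
    pderivTwoVar i (w ^ (n + 1)) = (n + 1) • (w ^ n * pderivTwoVar i w) := by
  induction n with
  | zero => simp
  | succ n ih =>
    rw [pow_succ, pderiv_mul, ih, smul_mul_assoc]
    have hcomm : w ^ n * pderivTwoVar i w * w = w ^ (n + 1) * pderivTwoVar i w := by ring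
    rw [hcomm]
    conv_rhs => rw [succ_nsmul]
    exact add_comm _ _

lemma coeff_pow_eq_zero {w : MvPowerSeries (Fin 2) R}
    (hw : MvPowerSeries.constantCoeff w = 0) :
    ∀ (n : ℕ) (m : Fin 2 →₀ ℕ), m 0 + m 1 < n → MvPowerSeries.coeff m (w ^ n) = 0 := by
  classical
  intro n
  induction n with
  | zero => intro m hm; omega
  | succ n ih =>
    intro m hm
    rw [pow_succ', MvPowerSeries.coeff_mul]
    apply Finset.sum_eq_zero
    intro x hx
    rw [Finset.HasAntidiagonal.mem_antidiagonal] at hx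
    by_cases h1 : x.1 = 0
    · rw [h1, MvPowerSeries.coeff_zero_eq_constantCoeff_apply, hw, zero_mul]
    · have hx0 := DFunLike.congr_fun hx 0
      have hx1 := DFunLike.congr_fun hx 1
      simp only [Finsupp.add_apply] at hx0 hx1
      have hne : x.1 0 ≠ 0 ∨ x.1 1 ≠ 0 := by
        by_contra hc
        push_neg at hc
        exact h1 (fin2_eq_iff.mpr ⟨hc.1, hc.2⟩)
      rw [ih x.2 (by omega), mul_zero]

lemma pderiv_subst (f : PowerSeries R) (w : MvPowerSeries (Fin 2) R)
    (hw : MvPowerSeries.constantCoeff w = 0) (i : Fin 2) :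
    pderivTwoVar i (substTwoVar f w)
      = substTwoVar f.derivativeFun w * pderivTwoVar i w := by
  classical
  apply MvPowerSeries.ext
  intro m
  set D := m 0 + m 1 with hD
  have hdeg : ((m + Finsupp.single i 1).sum fun _ e => e) = D + 1 := by
    rw [deg_eq]
    simp only [Finsupp.add_apply, Finsupp.single_apply]
    fin_cases i <;> simp <;> omega
  rw [coeff_pderiv, coeff_subst', hdeg, Finset.mul_sum]
  have step1 : ∀ n ∈ Finset.range (D + 1 + 1),
      ((m i + 1 : ℕ) : R) * (PowerSeries.coeff n f
        * MvPowerSeries.coeff (m + Finsupp.single i 1) (w ^ n))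
      = PowerSeries.coeff n f * MvPowerSeries.coeff m (pderivTwoVar i (w ^ n)) := by
    intro n _
    rw [coeff_pderiv]
    ring
  rw [Finset.sum_congr rfl step1, Finset.sum_range_succ']
  have hzero : PowerSeries.coeff 0 f
      * MvPowerSeries.coeff m (pderivTwoVar i (w ^ 0)) = 0 := by
    rw [pow_zero, pderiv_one_eq, map_zero, mul_zero]
  rw [hzero, add_zero]
  have step2 : ∀ k ∈ Finset.range (D + 1),
      PowerSeries.coeff (k + 1) f * MvPowerSeries.coeff m (pderivTwoVar i (w ^ (k + 1)))
      = PowerSeries.coeff k f.derivativeFun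
          * MvPowerSeries.coeff m (w ^ k * pderivTwoVar i w) := by
    intro k _
    rw [pderiv_pow, map_nsmul]
    erw [PowerSeries.coeff_derivative]
    rw [nsmul_eq_mul]
    push_cast
    ring
  rw [Finset.sum_congr rfl step2]
  -- now handle the RHS
  rw [MvPowerSeries.coeff_mul]
  have step3 : ∀ x ∈ antidiagonal m,
      MvPowerSeries.coeff x.1 (substTwoVar f.derivativeFun w)
        * MvPowerSeries.coeff x.2 (pderivTwoVar i w)
      = ∑ n ∈ Finset.range (D + 1), PowerSeries.coeff n f.derivativeFun
          * MvPowerSeries.coeff x.1 (w ^ n)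
          * MvPowerSeries.coeff x.2 (pderivTwoVar i w) := by
    intro x hx
    rw [Finset.HasAntidiagonal.mem_antidiagonal] at hx
    have hx0 := DFunLike.congr_fun hx 0
    have hx1 := DFunLike.congr_fun hx 1
    simp only [Finsupp.add_apply] at hx0 hx1
    rw [coeff_subst', deg_eq, Finset.sum_mul]
    apply Finset.sum_subset
    · apply Finset.range_subset_range.mpr
      omega
    · intro n _ hn
      rw [Finset.mem_range] at hn
      rw [coeff_pow_eq_zero hw n x.1 (by omega), mul_zero, zero_mul]
  rw [Finset.sum_congr rfl step3, Finset.sum_comm]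
  apply Finset.sum_congr rfl
  intro n _
  rw [MvPowerSeries.coeff_mul, Finset.mul_sum]
  apply Finset.sum_congr rfl
  intro x _
  ring

lemma pderiv_X_same (i : Fin 2) :
    pderivTwoVar i (MvPowerSeries.X i : MvPowerSeries (Fin 2) R) = 1 := by
  classical
  apply MvPowerSeries.ext
  intro m
  rw [coeff_pderiv, MvPowerSeries.coeff_X, MvPowerSeries.coeff_one]
  by_cases h : m = 0
  · subst h; simp
  · rw [if_neg h, if_neg, mul_zero]
    intro hc
    apply h
    ext j
    have := DFunLike.congr_fun hc j
    simp only [Finsupp.add_apply, Finsupp.single_apply] at this ⊢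
    by_cases hij : i = j <;> simp [hij] at this ⊢ <;> omega

lemma pderiv_X_ne (i j : Fin 2) (h : j ≠ i) :
    pderivTwoVar i (MvPowerSeries.X j : MvPowerSeries (Fin 2) R) = 0 := by
  classical
  apply MvPowerSeries.ext
  intro m
  rw [coeff_pderiv, MvPowerSeries.coeff_X, map_zero, if_neg, mul_zero]
  intro hc
  have := DFunLike.congr_fun hc i
  rw [Finsupp.add_apply, Finsupp.single_apply, Finsupp.single_apply, if_pos rfl,
    if_neg h] at this
  omega

lemma coeff_X0_mul_eq_zero {z : MvPowerSeries (Fin 2) R} {m : Fin 2 →₀ ℕ} (hm : m 0 = 0) :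
    MvPowerSeries.coeff m (MvPowerSeries.X 0 * z) = 0 := by
  classical
  rw [MvPowerSeries.X_def, MvPowerSeries.coeff_monomial_mul, if_neg]
  rw [Finsupp.single_le_iff]
  omega

lemma eq_zero_of_eq_X0_mul (g v : MvPowerSeries (Fin 2) R)
    (h : v = MvPowerSeries.X 0 * (g * v)) : v = 0 := by
  classical
  apply MvPowerSeries.ext
  intro m
  rw [map_zero]
  suffices H : ∀ (k : ℕ) (m : Fin 2 →₀ ℕ), m 0 ≤ k → MvPowerSeries.coeff m v = 0 by
    exact H (m 0) m le_rfl
  intro k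
  induction k with
  | zero =>
    intro m hm
    rw [h]
    exact coeff_X0_mul_eq_zero (by omega)
  | succ k ih =>
    intro m hm
    by_cases h0 : m 0 = 0
    · rw [h]; exact coeff_X0_mul_eq_zero h0
    · rw [h, MvPowerSeries.X_def, MvPowerSeries.coeff_monomial_mul, if_pos
        (Finsupp.single_le_iff.mpr (by omega)), one_mul, MvPowerSeries.coeff_mul]
      apply Finset.sum_eq_zero
      intro x hx
      rw [Finset.HasAntidiagonal.mem_antidiagonal] at hx
      have hx0 := DFunLike.congr_fun hx 0
      simp [Finsupp.single_apply] at hx0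
      rw [ih x.2 (by omega), mul_zero]

lemma pow_add_X0_mul (a z : MvPowerSeries (Fin 2) R) (n : ℕ) :
    ∃ c : MvPowerSeries (Fin 2) R,
      (a + MvPowerSeries.X 0 * z) ^ n = a ^ n + MvPowerSeries.X 0 * c := by
  induction n with
  | zero => exact ⟨0, by simp⟩
  | succ n ih =>
    obtain ⟨c, hc⟩ := ih
    refine ⟨c * a + a ^ n * z + MvPowerSeries.X 0 * (c * z), ?_⟩
    rw [pow_succ, hc, pow_succ]
    ring

end Statement8Aux

open Statement8Aux MvPowerSeries Finset in
/-- If `u ∈ R⟦t,x⟧` (here `t = X 0`, `x = X 1`) satisfies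
`u = f(x + t·u)`, then `u` satisfies the Hopf equation `∂u/∂t = u · ∂u/∂x`, and
substituting `t = 0` into `u` yields `f(x)`. -/
theorem statement8 {R : Type*} [CommRing R] (f : PowerSeries R)
    (u : MvPowerSeries (Fin 2) R)
    (hu : u = substTwoVar f (MvPowerSeries.X 1 + MvPowerSeries.X 0 * u)) :
    pderivTwoVar 0 u = u * pderivTwoVar 1 u ∧
      ∀ m : Fin 2 →₀ ℕ, m 0 = 0 →
        MvPowerSeries.coeff m u = PowerSeries.coeff (m 1) f := by
  classical
  set w : MvPowerSeries (Fin 2) R := MvPowerSeries.X 1 + MvPowerSeries.X 0 * u with hwdef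
  have hw : MvPowerSeries.constantCoeff w = 0 := by
    rw [hwdef, map_add, map_mul, MvPowerSeries.constantCoeff_X,
      MvPowerSeries.constantCoeff_X, zero_mul, add_zero]
  set E : MvPowerSeries (Fin 2) R := substTwoVar f.derivativeFun w with hEdef
  have hdw0 : pderivTwoVar 0 w = u + MvPowerSeries.X 0 * pderivTwoVar 0 u := by
    rw [hwdef, pderiv_add, pderiv_X_ne 0 1 (by decide), pderiv_mul, pderiv_X_same, one_mul]
    ring
  have hdw1 : pderivTwoVar 1 w = 1 + MvPowerSeries.X 0 * pderivTwoVar 1 u := by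
    rw [hwdef, pderiv_add, pderiv_X_same, pderiv_mul, pderiv_X_ne 1 0 (by decide), zero_mul]
    ring
  have h0 : pderivTwoVar 0 u = E * (u + MvPowerSeries.X 0 * pderivTwoVar 0 u) := by
    conv_lhs => rw [hu]
    rw [pderiv_subst f w hw 0, hdw0]
  have h1 : pderivTwoVar 1 u = E * (1 + MvPowerSeries.X 0 * pderivTwoVar 1 u) := by
    conv_lhs => rw [hu]
    rw [pderiv_subst f w hw 1, hdw1]
  constructor
  · have hv : u * pderivTwoVar 1 u - pderivTwoVar 0 u
        = MvPowerSeries.X 0 * (E * (u * pderivTwoVar 1 u - pderivTwoVar 0 u)) := by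
      conv_lhs => rw [h0, h1]
      ring
    have := eq_zero_of_eq_X0_mul E _ hv
    have h' : u * pderivTwoVar 1 u = pderivTwoVar 0 u := by
      rwa [sub_eq_zero] at this
    exact h'.symm
  · intro m hm0
    rw [hu, coeff_subst', deg_eq, hm0, zero_add]
    have hcoef : ∀ n : ℕ, MvPowerSeries.coeff m (w ^ n)
        = if n = m 1 then 1 else 0 := by
      intro n
      obtain ⟨c, hc⟩ := pow_add_X0_mul (MvPowerSeries.X 1) u n
      rw [hwdef, hc, map_add, coeff_X0_mul_eq_zero hm0, add_zero,
        MvPowerSeries.coeff_X_pow]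
      congr 1
      rw [eq_iff_iff]
      constructor
      · intro h
        have := DFunLike.congr_fun h 1
        simp [Finsupp.single_apply] at this
        omega
      · intro h
        subst h
        ext j
        have : m 0 = 0 := hm0
        fin_cases j <;> simp [Finsupp.single_apply, this]
    rw [Finset.sum_congr rfl (fun n _ => by rw [hcoef n])]
    rw [Finset.sum_eq_single (m 1)]
    · simp
    · intro n _ hn
      rw [if_neg hn, mul_zero]
    · intro hmem
      exact absurd (Finset.mem_range.mpr (by omega)) hmem
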